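/- Let n ≥ 1 and work in E = EuclideanSpace ℝ (Fin n). Let f, h : E → ℝ be twice continuously differentiable with h σ-strongly convex (σ > 0), and f R_f-relatively smooth with respect to h in the inequality sense: f(x) − f(y) − ⟪∇f(y), x − y⟫ ≤ R_f · D_h(x, y) for all x, y. Let g : E → EReal be proper, lower semicontinuous and convex, set E(x) = (f(x) : EReal) + g(x), and assume E is bounded below. Let c₀ > 0, w̄ ≥ 0, 0 < α_min ≤ α_max. Let (x^k)_{k ≥ 0} (with x^1 = x^0, E(x^0) finite), (w_k) with w_k ∈ [0, w̄], and (α_k) with α_k ∈ [α_min, α_max] be sequences such that for every k ≥ 1: y^k = x^k + w_k•(x^k − x^{k−1}), x^{k+1} has g(x^{k+1}) finite and minimizes u ↦ g(u) + ⟪∇f(y^k), u − y^k⟫ + (1/α_k)·D_h(u, y^k) over E, and E(x^k) and E(x^{k+1}) are finite reals with E(x^k) − E(x^{k+1}) ≥ c₀·‖x^k − x^{k+1}‖². Assume furthermore that the sublevel set {x : E(x) ≤ E(x^0)} is bounded. Then for every cluster point x* of the sequence (x^k), one has −∇f(x*) ∈ ∂g(x*), i.e. 0 ∈ ∂(f+g)(x*).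 -/

import Mathlib

open RealInnerProductSpace

/-- The Bregman distance `D_h(x, y) = h(x) − h(y) − ⟪∇h(y), x − y⟫`. -/
noncomputable def bregman {n : ℕ} (h : EuclideanSpace ℝ (Fin n) → ℝ)
    (x y : EuclideanSpace ℝ (Fin n)) : ℝ :=
  h x - h y - ⟪gradient h y, x - y⟫

open Filter Topology InnerProductSpace

private lemma ereal_fin {a : EReal} (h1 : a ≠ ⊥) (h2 : a ≠ ⊤) : ∃ r : ℝ, a = (r : EReal) := by
  induction a with
  | bot => exact absurd rfl h1
  | coe r => exact ⟨r, rfl⟩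
  | top => exact absurd rfl h2

section Aux
variable {n : ℕ}
local notation "E" => EuclideanSpace ℝ (Fin n)

private lemma grad_cont {f : E → ℝ} (hf : ContDiff ℝ 1 f) :
    Continuous fun z : E => gradient f z := by
  simp only [gradient]
  exact (InnerProductSpace.toDual ℝ E).symm.continuous.comp (hf.continuous_fderiv one_ne_zero)

private lemma line_hasDerivAt {f : E → ℝ} (hf : ContDiff ℝ 1 f) (z d : E) :
    HasDerivAt (fun t : ℝ => f (z + t • d)) ⟪gradient f z, d⟫ 0 := by
  have hgrad : HasGradientAt f (gradient f z) z := (hf.differentiable one_ne_zero z).hasGradientAt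
  have hF : HasFDerivAt f (toDual ℝ E (gradient f z)) z := hgrad.hasFDerivAt
  have hline : HasDerivAt (fun t : ℝ => z + t • d) d 0 := by
    simpa using ((hasDerivAt_id (0:ℝ)).smul_const d).const_add z
  have h0 : (fun t : ℝ => z + t • d) 0 = z := by simp
  have := HasFDerivAt.comp_hasDerivAt 0 (h0.symm ▸ hF) hline
  simpa [toDual_apply_apply, Function.comp_def] using this

private lemma key_subgrad {h : E → ℝ} (hh : ContDiff ℝ 1 h)
    (g : E → EReal) (hg_bot : ∀ x, g x ≠ ⊥)
    (hg_convex : ∀ x y : E, ∀ t : ℝ, 0 ≤ t → t ≤ 1 →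
      g (t • x + (1 - t) • y) ≤ (t : EReal) * g x + ((1 - t : ℝ) : EReal) * g y)
    (gf : E) (a : ℝ) (yk z : E) (hz_top : g z ≠ ⊤)
    (hmin : ∀ u, g z + ((⟪gf, z - yk⟫ + (1/a) * bregman h z yk : ℝ) : EReal)
        ≤ g u + ((⟪gf, u - yk⟫ + (1/a) * bregman h u yk : ℝ) : EReal)) :
    ∀ u, g z + ((⟪-gf - (1/a) • (gradient h z - gradient h yk), u - z⟫ : ℝ) : EReal) ≤ g u := by
  intro u
  rcases eq_or_ne (g u) ⊤ with hu | hu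
  · rw [hu]; exact le_top
  obtain ⟨Gz, hGz⟩ := ereal_fin (hg_bot z) hz_top
  obtain ⟨Gu, hGu⟩ := ereal_fin (hg_bot u) hu
  set d : E := u - z with hd
  set ψ : E → ℝ := fun p => ⟪gf, p - yk⟫ + (1/a) * bregman h p yk with hψ
  set q : ℝ → ℝ := fun t => ψ (z + t • d) with hq
  have step : ∀ t ∈ Set.Ioo (0:ℝ) 1, Gz - Gu ≤ (q t - q 0) / t := by
    intro t ht
    have hcomb : z + t • d = t • u + (1 - t) • z := by
      rw [hd, smul_sub, sub_smul, one_smul]; abel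
    have hconv := hg_convex u z t ht.1.le ht.2.le
    have hm := hmin (z + t • d)
    rw [hcomb] at hm
    have hle : ((Gz + ψ z : ℝ) : EReal) ≤ ((t * Gu + (1 - t) * Gz + ψ (t • u + (1-t) • z) : ℝ) : EReal) := by
      calc ((Gz + ψ z : ℝ) : EReal) = g z + ((ψ z : ℝ) : EReal) := by
            rw [hGz, ← EReal.coe_add]
        _ ≤ g (t • u + (1-t) • z) + ((ψ (t • u + (1-t) • z) : ℝ) : EReal) := hm
        _ ≤ ((t : EReal) * g u + ((1 - t : ℝ) : EReal) * g z) + ((ψ (t • u + (1-t) • z) : ℝ) : EReal) :=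
            add_le_add hconv le_rfl
        _ = ((t * Gu + (1 - t) * Gz + ψ (t • u + (1-t) • z) : ℝ) : EReal) := by
            rw [hGu, hGz, ← EReal.coe_mul, ← EReal.coe_mul, ← EReal.coe_add, ← EReal.coe_add]
    rw [EReal.coe_le_coe_iff] at hle
    have hq0 : q 0 = ψ z := by simp [hq]
    have hqt : q t = ψ (t • u + (1-t) • z) := by rw [hq]; simp only [← hcomb]
    rw [hq0, hqt, le_div_iff₀ ht.1]
    nlinarith [hle]
  have hderiv : HasDerivAt q (⟪gf, d⟫ + (1/a) * (⟪gradient h z, d⟫ - ⟪gradient h yk, d⟫)) 0 := by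
    have hA : HasDerivAt (fun t : ℝ => ⟪gf, (z + t • d) - yk⟫) ⟪gf, d⟫ 0 := by
      have heq : (fun t : ℝ => ⟪gf, (z + t • d) - yk⟫)
          = fun t : ℝ => ⟪gf, z - yk⟫ + t * ⟪gf, d⟫ := by
        funext t
        rw [show (z + t • d) - yk = (z - yk) + t • d by abel, inner_add_right,
          real_inner_smul_right]
      rw [heq]
      simpa using ((hasDerivAt_id (0:ℝ)).mul_const ⟪gf, d⟫).const_add ⟪gf, z - yk⟫
    have hB : HasDerivAt (fun t : ℝ => h (z + t • d)) ⟪gradient h z, d⟫ 0 :=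
      line_hasDerivAt hh z d
    have hC : HasDerivAt (fun t : ℝ => ⟪gradient h yk, (z + t • d) - yk⟫) ⟪gradient h yk, d⟫ 0 := by
      have heq : (fun t : ℝ => ⟪gradient h yk, (z + t • d) - yk⟫)
          = fun t : ℝ => ⟪gradient h yk, z - yk⟫ + t * ⟪gradient h yk, d⟫ := by
        funext t
        rw [show (z + t • d) - yk = (z - yk) + t • d by abel, inner_add_right,
          real_inner_smul_right]
      rw [heq]
      simpa using ((hasDerivAt_id (0:ℝ)).mul_const _).const_add ⟪gradient h yk, z - yk⟫
    have := hA.add ((((hB.sub_const (h yk)).sub hC)).const_mul (1/a))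
    simpa [hq, hψ, bregman, mul_sub, mul_add, Pi.add_def] using this
  have hslope : Filter.Tendsto (fun t => (q t - q 0) / t) (𝓝[>] (0:ℝ))
      (𝓝 (⟪gf, d⟫ + (1/a) * (⟪gradient h z, d⟫ - ⟪gradient h yk, d⟫))) := by
    have h1 := hasDerivAt_iff_tendsto_slope.mp hderiv
    have hmono : 𝓝[>] (0:ℝ) ≤ 𝓝[≠] (0:ℝ) :=
      nhdsWithin_mono _ (fun t ht => ne_of_gt ht)
    refine (h1.mono_left hmono).congr' ?_
    filter_upwards [self_mem_nhdsWithin] with t ht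
    rw [slope_def_field]; ring
  have hfinal : Gz - Gu ≤ ⟪gf, d⟫ + (1/a) * (⟪gradient h z, d⟫ - ⟪gradient h yk, d⟫) := by
    refine ge_of_tendsto hslope ?_
    filter_upwards [Ioo_mem_nhdsGT_of_mem (Set.mem_Ico.mpr ⟨le_rfl, zero_lt_one⟩)] with t ht
    exact step t ht
  rw [hGz, hGu, ← EReal.coe_add, EReal.coe_le_coe_iff]
  have hinner : ⟪-gf - (1/a) • (gradient h z - gradient h yk), d⟫
      = -(⟪gf, d⟫ + (1/a) * (⟪gradient h z, d⟫ - ⟪gradient h yk, d⟫)) := by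
    rw [inner_sub_left, inner_neg_left, real_inner_smul_left, inner_sub_left]
    ring
  rw [hinner]
  linarith
end Aux

/-- Subsequential convergence of the AA-BPG method: every cluster point `x*` of the
iterates is a stationary point, i.e. `−∇f(x*) ∈ ∂g(x*)`. -/
theorem aabpg_cluster_point_stationary
    (n : ℕ) (hn : 1 ≤ n)
    (f h : EuclideanSpace ℝ (Fin n) → ℝ)
    (hf : ContDiff ℝ 2 f) (hh : ContDiff ℝ 2 h)
    (σ Rf : ℝ) (hσ : 0 < σ)
    (hstrong : ConvexOn ℝ Set.univ (fun x => h x - σ / 2 * ‖x‖ ^ 2))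
    (hrel : ∀ x y : EuclideanSpace ℝ (Fin n),
      f x - f y - ⟪gradient f y, x - y⟫ ≤ Rf * bregman h x y)
    (g : EuclideanSpace ℝ (Fin n) → EReal)
    (hg_bot : ∀ x, g x ≠ ⊥) (hg_proper : ∃ x, g x ≠ ⊤)
    (hg_lsc : LowerSemicontinuous g)
    (hg_convex : ∀ x y : EuclideanSpace ℝ (Fin n), ∀ t : ℝ, 0 ≤ t → t ≤ 1 →
      g (t • x + (1 - t) • y) ≤ (t : EReal) * g x + ((1 - t : ℝ) : EReal) * g y)
    (En : EuclideanSpace ℝ (Fin n) → EReal)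
    (hEn : ∀ x, En x = (f x : EReal) + g x)
    (hbdd : ∃ m : ℝ, ∀ x, (m : EReal) ≤ En x)
    (c₀ wbar αmin αmax : ℝ)
    (hc₀ : 0 < c₀) (hwbar : 0 ≤ wbar) (hαmin : 0 < αmin) (hαminmax : αmin ≤ αmax)
    (x y : ℕ → EuclideanSpace ℝ (Fin n)) (w α : ℕ → ℝ)
    (hx1 : x 1 = x 0) (hE0 : En (x 0) ≠ ⊤)
    (hw : ∀ k, w k ∈ Set.Icc 0 wbar) (hα : ∀ k, α k ∈ Set.Icc αmin αmax)
    (hy : ∀ k ≥ 1, y k = x k + w k • (x k - x (k - 1)))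
    (hgfin : ∀ k ≥ 1, g (x (k + 1)) ≠ ⊤)
    (hmin : ∀ k ≥ 1, ∀ u : EuclideanSpace ℝ (Fin n),
      g (x (k + 1)) +
        ((⟪gradient f (y k), x (k + 1) - y k⟫ +
          (1 / α k) * bregman h (x (k + 1)) (y k) : ℝ) : EReal) ≤
      g u + ((⟪gradient f (y k), u - y k⟫ + (1 / α k) * bregman h u (y k) : ℝ) : EReal))
    (hdec : ∀ k ≥ 1, ∃ Ek Ek1 : ℝ, En (x k) = (Ek : EReal) ∧ En (x (k + 1)) = (Ek1 : EReal) ∧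
      Ek - Ek1 ≥ c₀ * ‖x k - x (k + 1)‖ ^ 2)
    (hsub : Bornology.IsBounded {u : EuclideanSpace ℝ (Fin n) | En u ≤ En (x 0)})
    (xstar : EuclideanSpace ℝ (Fin n)) (φ : ℕ → ℕ) (hφ : StrictMono φ)
    (hlim : Filter.Tendsto (fun k => x (φ k)) Filter.atTop (nhds xstar)) :
    g xstar ≠ ⊤ ∧
      ∀ v : EuclideanSpace ℝ (Fin n),
        g xstar + ((⟪-gradient f xstar, v - xstar⟫ : ℝ) : EReal) ≤ g v := by
  obtain ⟨m, hm⟩ := hbdd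
  -- real-valued energy
  set Er : ℕ → ℝ := fun k => (En (x k)).toReal with hEr
  have hErk : ∀ k ≥ 1, En (x k) = ((Er k : ℝ) : EReal) := by
    intro k hk
    obtain ⟨Ek, _, h1, _, _⟩ := hdec k hk
    simp only [hEr, h1, EReal.toReal_coe]
  have hdrop : ∀ k ≥ 1, Er k - Er (k + 1) ≥ c₀ * ‖x k - x (k + 1)‖ ^ 2 := by
    intro k hk
    obtain ⟨Ek, Ek1, h1, h2, h3⟩ := hdec k hk
    have e1 : Er k = Ek := by simp only [hEr, h1, EReal.toReal_coe]
    have e2 : Er (k + 1) = Ek1 := by simp only [hEr, h2, EReal.toReal_coe]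
    rw [e1, e2]; exact h3
  have hlb : ∀ k ≥ 1, m ≤ Er k := by
    intro k hk
    have := hm (x k)
    rw [hErk k hk] at this
    exact_mod_cast this
  set b : ℕ → ℝ := fun j => Er (j + 1) with hb
  have hanti : Antitone b := by
    refine antitone_nat_of_succ_le fun j => ?_
    have := hdrop (j + 1) (by omega)
    nlinarith [sq_nonneg ‖x (j+1) - x (j+2)‖, mul_nonneg hc₀.le (sq_nonneg ‖x (j+1) - x (j+2)‖)]
  have hbddb : BddBelow (Set.range b) := by
    refine ⟨m, fun r hr => ?_⟩
    obtain ⟨j, rfl⟩ := hr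
    exact hlb (j + 1) (by omega)
  have hconv : Filter.Tendsto b Filter.atTop (nhds (⨅ i, b i)) :=
    tendsto_atTop_ciInf hanti hbddb
  have hshift : Filter.Tendsto (fun j => b (j + 1)) Filter.atTop (nhds (⨅ i, b i)) :=
    hconv.comp (tendsto_add_atTop_nat 1)
  have hdiff : Filter.Tendsto (fun j => b j - b (j + 1)) Filter.atTop (nhds 0) := by
    simpa using hconv.sub hshift
  have hsq0 : Filter.Tendsto (fun j => c₀ * ‖x (j+1) - x (j+2)‖ ^ 2) Filter.atTop (nhds 0) := by
    refine squeeze_zero (fun j => mul_nonneg hc₀.le (sq_nonneg _)) (fun j => ?_) hdiff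
    have := hdrop (j + 1) (by omega)
    simpa [hb] using this
  have hsq : Filter.Tendsto (fun j => ‖x (j+1) - x (j+2)‖ ^ 2) Filter.atTop (nhds 0) := by
    have := hsq0.div_const c₀
    simpa [mul_div_cancel_left₀ _ hc₀.ne'] using this
  have hnorm : Filter.Tendsto (fun j => ‖x (j+1) - x (j+2)‖) Filter.atTop (nhds 0) := by
    have h1 := (Real.continuous_sqrt.tendsto 0).comp hsq
    simpa [Function.comp_def, Real.sqrt_sq (norm_nonneg _)] using h1
  have hDshift : Filter.Tendsto (fun j => x (j+1) - x (j+2)) Filter.atTop (nhds 0) :=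
    tendsto_zero_iff_norm_tendsto_zero.mpr hnorm
  have hD : Filter.Tendsto (fun k => x k - x (k + 1)) Filter.atTop (nhds 0) :=
    (tendsto_add_atTop_iff_nat 1).mp hDshift
  -- along the subsequence
  have hφtop : Filter.Tendsto φ Filter.atTop Filter.atTop := hφ.tendsto_atTop
  have hDφ : Filter.Tendsto (fun j => x (φ j) - x (φ j + 1)) Filter.atTop (nhds 0) :=
    hD.comp hφtop
  have hxφ1 : Filter.Tendsto (fun j => x (φ j + 1)) Filter.atTop (nhds xstar) := by
    have := hlim.sub hDφ
    simpa using this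
  -- y (φ j) → xstar
  have hsucc : Filter.Tendsto (fun k => x (k + 1) - x k) Filter.atTop (nhds 0) := by
    have := hD.neg
    simpa [neg_sub] using this
  have hprev : Filter.Tendsto (fun k => x k - x (k - 1)) Filter.atTop (nhds 0) := by
    have h2 : Filter.Tendsto (fun k : ℕ => k - 1) Filter.atTop Filter.atTop :=
      tendsto_sub_atTop_nat 1
    have h3 := hsucc.comp h2
    refine h3.congr' ?_
    filter_upwards [eventually_ge_atTop 1] with k hk
    simp only [Function.comp_apply]
    have hkk : k - 1 + 1 = k := by omega
    rw [hkk]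
  have hwd : Filter.Tendsto (fun k => w k • (x k - x (k - 1))) Filter.atTop (nhds 0) := by
    have hgb : Filter.Tendsto (fun k => wbar * ‖x k - x (k - 1)‖) Filter.atTop (nhds 0) := by
      simpa using tendsto_const_nhds.mul hprev.norm
    refine squeeze_zero_norm (fun k => ?_) hgb
    rw [norm_smul, Real.norm_eq_abs, abs_of_nonneg (hw k).1]
    exact mul_le_mul_of_nonneg_right (hw k).2 (norm_nonneg _)
  have hyφ : Filter.Tendsto (fun j => y (φ j)) Filter.atTop (nhds xstar) := by
    have h4 : Filter.Tendsto (fun j => x (φ j) + w (φ j) • (x (φ j) - x (φ j - 1)))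
        Filter.atTop (nhds xstar) := by
      have := hlim.add (hwd.comp hφtop)
      simpa using this
    refine h4.congr' ?_
    filter_upwards [eventually_ge_atTop 1] with j hj
    exact (hy (φ j) (le_trans hj (hφ.le_apply))).symm
  -- continuity of gradients
  have hgfc : Continuous fun z => gradient f z := grad_cont (hf.of_le one_le_two)
  have hghc : Continuous fun z => gradient h z := grad_cont (hh.of_le one_le_two)
  have hgf_lim : Filter.Tendsto (fun j => gradient f (y (φ j))) Filter.atTop
      (nhds (gradient f xstar)) := (hgfc.tendsto xstar).comp hyφ
  have hdh : Filter.Tendsto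
      (fun j => gradient h (x (φ j + 1)) - gradient h (y (φ j))) Filter.atTop (nhds 0) := by
    have := ((hghc.tendsto xstar).comp hxφ1).sub ((hghc.tendsto xstar).comp hyφ)
    simpa using this
  have hs0 : Filter.Tendsto
      (fun j => (1 / α (φ j)) • (gradient h (x (φ j + 1)) - gradient h (y (φ j))))
      Filter.atTop (nhds 0) := by
    have hgb : Filter.Tendsto
        (fun j => (1 / αmin) * ‖gradient h (x (φ j + 1)) - gradient h (y (φ j))‖)
        Filter.atTop (nhds 0) := by
      simpa using tendsto_const_nhds.mul hdh.norm
    refine squeeze_zero_norm (fun j => ?_) hgb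
    rw [norm_smul, Real.norm_eq_abs]
    have hαpos : 0 < α (φ j) := lt_of_lt_of_le hαmin (hα (φ j)).1
    rw [abs_of_nonneg (by positivity)]
    exact mul_le_mul_of_nonneg_right
      (one_div_le_one_div_of_le hαmin (hα (φ j)).1) (norm_nonneg _)
  -- the key subgradient inequality along the subsequence
  have key : ∀ j ≥ 1, ∀ u : EuclideanSpace ℝ (Fin n),
      g (x (φ j + 1)) +
        ((⟪-gradient f (y (φ j)) -
            (1 / α (φ j)) • (gradient h (x (φ j + 1)) - gradient h (y (φ j))),
          u - x (φ j + 1)⟫ : ℝ) : EReal) ≤ g u := by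
    intro j hj
    have hk1 : 1 ≤ φ j := le_trans hj hφ.le_apply
    exact key_subgrad (hh.of_le one_le_two) g hg_bot hg_convex
      (gradient f (y (φ j))) (α (φ j)) (y (φ j)) (x (φ j + 1))
      (hgfin (φ j) hk1) (hmin (φ j) hk1)
  -- main estimate
  have main : ∀ v : EuclideanSpace ℝ (Fin n), ∀ Gv : ℝ, g v = (Gv : EReal) →
      g xstar ≤ ((Gv - ⟪-gradient f xstar, v - xstar⟫ : ℝ) : EReal) := by
    intro v Gv hGv
    set r : ℕ → ℝ := fun j =>
      ⟪-gradient f (y (φ j)) -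
          (1 / α (φ j)) • (gradient h (x (φ j + 1)) - gradient h (y (φ j))),
        v - x (φ j + 1)⟫ with hr
    have hA : Filter.Tendsto
        (fun j => -gradient f (y (φ j)) -
          (1 / α (φ j)) • (gradient h (x (φ j + 1)) - gradient h (y (φ j))))
        Filter.atTop (nhds (-gradient f xstar)) := by
      have := hgf_lim.neg.sub hs0
      simpa using this
    have hB : Filter.Tendsto (fun j => v - x (φ j + 1)) Filter.atTop (nhds (v - xstar)) :=
      tendsto_const_nhds.sub hxφ1
    have hrlim : Filter.Tendsto r Filter.atTop (nhds ⟪-gradient f xstar, v - xstar⟫) :=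
      hA.inner hB
    by_contra hcon
    push_neg at hcon
    obtain ⟨c, hc1, hc2⟩ := EReal.exists_between_coe_real hcon
    have hev1 : ∀ᶠ j in Filter.atTop, (c : EReal) < g (x (φ j + 1)) :=
      hxφ1.eventually (hg_lsc xstar c hc2)
    have hev2 : ∀ᶠ j in Filter.atTop, r j ≤ Gv - c := by
      filter_upwards [hev1, eventually_ge_atTop 1] with j hj1 hj2
      obtain ⟨Gj, hGj⟩ := ereal_fin (hg_bot _) (hgfin (φ j) (le_trans hj2 hφ.le_apply))
      have h5 := key j hj2 v
      rw [hGj, hGv, ← EReal.coe_add, EReal.coe_le_coe_iff] at h5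
      rw [hGj, EReal.coe_lt_coe_iff] at hj1
      linarith
    have := le_of_tendsto hrlim hev2
    rw [EReal.coe_lt_coe_iff] at hc1
    linarith
  obtain ⟨v0, hv0⟩ := hg_proper
  obtain ⟨G0, hG0⟩ := ereal_fin (hg_bot v0) hv0
  have hxt : g xstar ≠ ⊤ :=
    ne_top_of_le_ne_top (EReal.coe_ne_top _) (main v0 G0 hG0)
  refine ⟨hxt, fun v => ?_⟩
  rcases eq_or_ne (g v) ⊤ with hv | hv
  · rw [hv]; exact le_top
  obtain ⟨Gv, hGv⟩ := ereal_fin (hg_bot v) hv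
  obtain ⟨Gs, hGs⟩ := ereal_fin (hg_bot xstar) hxt
  have h6 := main v Gv hGv
  rw [hGs, EReal.coe_le_coe_iff] at h6
  rw [hGs, hGv, ← EReal.coe_add, EReal.coe_le_coe_iff]
  linarith
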